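/- For the Steane code, there exist a 3-element subset A ⊆ {1,…,7} and a target t ∈ A such that for every θ ∈ ℝ the five-gate circuit V = (∏_{i∈A\{t}} CNOT_{i→t})⁻¹ · Z(θ)_t · (∏_{i∈A\{t}} CNOT_{i→t}) (four CNOT gates and one Z(θ) gate, acting only on the qubits in A) preserves the Steane codespace and implements the logical Z(θ) gate: V|0̄⟩ = |0̄⟩ and V|1̄⟩ = e^{iθ}|1̄⟩. In particular, taking θ = π/4 gives an implementation of the logical T gate on the Steane code involving only 3 of the 7 qubits. -/

import Mathlib

open scoped Classical
open Matrix

noncomputable section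

/-- basis vector `|x⟩` -/
def bvec {α : Type*} (x : α) : α → ℂ := fun y => if y = x then 1 else 0

/-- inner product `⟪v, w⟫` on basis-indexed amplitude vectors -/
def qInner {α : Type*} [Fintype α] (v w : α → ℂ) : ℂ :=
  ∑ x, (starRingEnd ℂ) (v x) * w x

/-- Pauli X -/
def σx : Matrix Bool Bool ℂ := Matrix.of fun a b => if a = !b then 1 else 0
/-- Pauli Y -/
def σy : Matrix Bool Bool ℂ :=
  Matrix.of fun a b => if a = !b then (if a then Complex.I else -Complex.I) else 0
/-- Pauli Z -/
def σz : Matrix Bool Bool ℂ := Matrix.of fun a b => if a = b then (if a then -1 else 1) else 0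
/-- Hadamard -/
def Hgate : Matrix Bool Bool ℂ :=
  Matrix.of fun a b => (if a && b then -1 else 1) / (Real.sqrt 2 : ℂ)
/-- phase gate S = diag(1, i) -/
def Sgate : Matrix Bool Bool ℂ :=
  Matrix.of fun a b => if a = b then (if a then Complex.I else 1) else 0
/-- Z(θ) = diag(1, e^{iθ}) -/
def Zrot (θ : ℝ) : Matrix Bool Bool ℂ :=
  Matrix.of fun a b => if a = b then (if a then Complex.exp (θ * Complex.I) else 1) else 0

/-- tensor product over `ι` of single-qubit matrices -/
def tensMat {ι : Type*} [Fintype ι] (P : ι → Matrix Bool Bool ℂ) :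
    Matrix (ι → Bool) (ι → Bool) ℂ :=
  Matrix.of fun x y => ∏ i, P i (x i) (y i)

/-- CNOT with control `i`, target `t`, in one register -/
def CNOT {ι : Type*} (i t : ι) : Matrix (ι → Bool) (ι → Bool) ℂ :=
  Matrix.of fun y x => if y = Function.update x t (xor (x i) (x t)) then 1 else 0

/-- Z(θ) applied to qubit `t` -/
def ZrotAt {ι : Type*} (θ : ℝ) (t : ι) : Matrix (ι → Bool) (ι → Bool) ℂ :=
  Matrix.of fun y x => if y = x then (if x t then Complex.exp (θ * Complex.I) else 1) else 0

/-- `parityOdd A x` : the bits of `x` indexed by `A` have odd parity -/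
def parityOdd {ι : Type*} (A : Finset ι) (x : ι → Bool) : Prop :=
  (A.filter fun i => x i = true).card % 2 = 1

/-- `∏_{i ∈ A} Z_i` -/
def ZA {ι : Type*} [Fintype ι] (A : Finset ι) : Matrix (ι → Bool) (ι → Bool) ℂ :=
  tensMat fun i => if i ∈ A then σz else 1

/-- `∏_{j ∈ B} X_j` -/
def XB {ι : Type*} [Fintype ι] (B : Finset ι) : Matrix (ι → Bool) (ι → Bool) ℂ :=
  tensMat fun j => if j ∈ B then σx else 1

/-- the joint `+1`-eigenspace of a set of matrices, as a submodule -/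
def jointFixed {ι : Type*} [Fintype ι] (S : Set (Matrix (ι → Bool) (ι → Bool) ℂ)) :
    Submodule ℂ ((ι → Bool) → ℂ) where
  carrier := {v | ∀ g ∈ S, g.mulVec v = v}
  add_mem' := by
    intro a b ha hb g hg
    rw [Matrix.mulVec_add, ha g hg, hb g hg]
  zero_mem' := by
    intro g hg
    rw [Matrix.mulVec_zero]
  smul_mem' := by
    intro c a ha g hg
    rw [Matrix.mulVec_smul, ha g hg]

/-- a matrix on qubits `ι` acts only on the qubits in `A` (identity elsewhere) -/
def ActsOnlyOn {ι : Type*} (M : Matrix (ι → Bool) (ι → Bool) ℂ) (A : Set ι) : Prop :=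
  ∃ W : Matrix (A → Bool) (A → Bool) ℂ,
    ∀ x y, M x y =
      if ∀ i, i ∉ A → x i = y i then W (fun i => x i.val) (fun i => y i.val) else 0

/-- an `ι`-qubit Pauli operator `i^c · ⨂_i P_i` -/
structure PauliOp (ι : Type*) [Fintype ι] where
  phase : Fin 4
  fac : ι → Matrix Bool Bool ℂ
  isPauli : ∀ i, fac i = 1 ∨ fac i = σx ∨ fac i = σy ∨ fac i = σz

def PauliOp.toMatrix {ι : Type*} [Fintype ι] (p : PauliOp ι) :
    Matrix (ι → Bool) (ι → Bool) ℂ :=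
  Complex.I ^ (p.phase : ℕ) • tensMat p.fac

/-- number of non-identity tensor factors -/
def PauliOp.weight {ι : Type*} [Fintype ι] (p : PauliOp ι) : ℕ :=
  Set.ncard {i | p.fac i ≠ 1}

/-- tensor product of states of two registers -/
def tens2 {ι κ : Type*} (v : (ι → Bool) → ℂ) (w : (κ → Bool) → ℂ) :
    (ι → Bool) × (κ → Bool) → ℂ :=
  fun p => v p.1 * w p.2

/-- CNOT with control qubit `i` of the first register and target qubit `j` of the second -/
def CNOT2 {ι κ : Type*} (i : ι) (j : κ) :
    Matrix ((ι → Bool) × (κ → Bool)) ((ι → Bool) × (κ → Bool)) ℂ :=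
  Matrix.of fun y x =>
    if y = (x.1, Function.update x.2 j (xor (x.1 i) (x.2 j))) then 1 else 0

-- Steane code
def steaneGen : Fin 3 → (Fin 7 → Bool) :=
  ![![false, false, false, true, true, true, true],
    ![false, true, true, false, false, true, true],
    ![true, false, true, false, true, false, true]]

/-- the binary [7,3] code generated by 0001111, 0110011, 1010101 -/
def hammingC : Set (Fin 7 → Bool) :=
  {c | ∃ a b e : Bool,
    c = fun i => xor (a && steaneGen 0 i) (xor (b && steaneGen 1 i) (e && steaneGen 2 i))}

/-- Steane logical basis: `steane false = |0̄⟩`, `steane true = |1̄⟩ = X^{⊗7}|0̄⟩` -/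
def steane : Bool → ((Fin 7 → Bool) → ℂ) := fun b =>
  if b then (tensMat fun _ => σx).mulVec (fun y => if y ∈ hammingC then ((Real.sqrt 8 : ℂ))⁻¹ else 0)
  else fun y => if y ∈ hammingC then ((Real.sqrt 8 : ℂ))⁻¹ else 0

-- 5-qubit code
def fiveStab : Fin 4 → Matrix (Fin 5 → Bool) (Fin 5 → Bool) ℂ :=
  ![tensMat ![σx, σz, σz, σx, 1],
    tensMat ![1, σx, σz, σz, σx],
    tensMat ![σx, 1, σx, σz, σz],
    tensMat ![σz, σx, 1, σx, σz]]

def fiveCodespace : Submodule ℂ ((Fin 5 → Bool) → ℂ) :=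
  jointFixed (Set.range fiveStab)

/-- a choice of logical basis for the 5-qubit code -/
def fiveLogical (v : Bool → ((Fin 5 → Bool) → ℂ)) : Prop :=
  (∀ b, v b ∈ fiveCodespace) ∧ (∀ b, qInner (v b) (v b) = 1) ∧
  (tensMat fun _ : Fin 5 => σz).mulVec (v false) = v false ∧
  (tensMat fun _ : Fin 5 => σz).mulVec (v true) = -(v true) ∧
  (tensMat fun _ : Fin 5 => σx).mulVec (v false) = v true

-- [[15,1,3]] Reed–Muller code
def rmBit (i : Fin 15) (j : Fin 4) : Bool := Nat.testBit (i.val + 1) j.val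

def rmXstab (j : Fin 4) : Matrix (Fin 15 → Bool) (Fin 15 → Bool) ℂ :=
  tensMat fun i => if rmBit i j then σx else 1

def rmZstab (j k : Fin 4) : Matrix (Fin 15 → Bool) (Fin 15 → Bool) ℂ :=
  tensMat fun i => if rmBit i j && rmBit i k then σz else 1

def rmCodespace : Submodule ℂ ((Fin 15 → Bool) → ℂ) :=
  jointFixed ({M | ∃ j, M = rmXstab j} ∪ {M | ∃ j k, j < k ∧ M = rmZstab j k})

/-- a choice of logical basis for the [[15,1,3]] Reed–Muller code -/
def rmLogical (w : Bool → ((Fin 15 → Bool) → ℂ)) : Prop :=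
  (∀ b, w b ∈ rmCodespace) ∧ (∀ b, qInner (w b) (w b) = 1) ∧
  (tensMat fun _ : Fin 15 => σz).mulVec (w false) = w false ∧
  (tensMat fun _ : Fin 15 => σz).mulVec (w true) = -(w true) ∧
  (tensMat fun _ : Fin 15 => σx).mulVec (w false) = w true


/-! ### Auxiliary material for statement 4 -/

/-- the bit map implemented by `CNOT i t` -/
def Fc (i t : Fin 7) (x : Fin 7 → Bool) : Fin 7 → Bool :=
  Function.update x t (xor (x i) (x t))

lemma update_irrel (inst1 inst2 : DecidableEq (Fin 7)) (f : Fin 7 → Bool) (a : Fin 7)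
    (b : Bool) : @Function.update _ _ inst1 f a b = @Function.update _ _ inst2 f a b := by
  rw [Subsingleton.elim inst1 inst2]

lemma cnot_apply (i t : Fin 7) (y x : Fin 7 → Bool) :
    CNOT i t y x = if y = Fc i t x then 1 else 0 := by
  unfold CNOT Fc
  rw [Matrix.of_apply]
  congr!

set_option maxRecDepth 20000 in
lemma hFc1 : ∀ x, Fc 1 0 (Fc 1 0 x) = x := by decide
set_option maxRecDepth 20000 in
lemma hFc2 : ∀ x, Fc 2 0 (Fc 2 0 x) = x := by decide
set_option maxRecDepth 20000 in
lemma hFc4 : ∀ x, Fc 1 0 (Fc 2 0 (Fc 1 0 (Fc 2 0 x))) = x := by decide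
set_option maxRecDepth 20000 in
lemma hFc4' : ∀ x, Fc 2 0 (Fc 1 0 (Fc 2 0 (Fc 1 0 x))) = x := by decide

lemma cnot_mulVec (i t : Fin 7) (h : ∀ x, Fc i t (Fc i t x) = x)
    (v : (Fin 7 → Bool) → ℂ) :
    (CNOT i t).mulVec v = fun y => v (Fc i t y) := by
  funext y
  have key : ∀ x : Fin 7 → Bool, (y = Fc i t x) = (x = Fc i t y) := by
    intro x
    apply propext
    constructor
    · intro hy; rw [hy, h]
    · intro hx; rw [hx, h]
  simp only [Matrix.mulVec, dotProduct, cnot_apply, key, ite_mul, one_mul, zero_mul]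
  simp

lemma mul_cnot (A : Matrix (Fin 7 → Bool) (Fin 7 → Bool) ℂ) (i t : Fin 7)
    (y x : Fin 7 → Bool) : (A * CNOT i t) y x = A y (Fc i t x) := by
  simp only [Matrix.mul_apply, cnot_apply, mul_ite, mul_one, mul_zero]
  simp

lemma hLL : (CNOT 1 0 * CNOT 2 0 : Matrix (Fin 7 → Bool) (Fin 7 → Bool) ℂ) *
    (CNOT 1 0 * CNOT 2 0) = 1 := by
  ext y x
  rw [show (CNOT 1 0 * CNOT 2 0 : Matrix (Fin 7 → Bool) (Fin 7 → Bool) ℂ) *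
      (CNOT 1 0 * CNOT 2 0) = ((CNOT 1 0 * CNOT 2 0) * CNOT 1 0) * CNOT 2 0 by
    rw [mul_assoc, mul_assoc, mul_assoc]]
  rw [mul_cnot, mul_cnot, mul_cnot, cnot_apply, hFc4, Matrix.one_apply]

lemma Linv : (CNOT 1 0 * CNOT 2 0 : Matrix (Fin 7 → Bool) (Fin 7 → Bool) ℂ)⁻¹ =
    CNOT 1 0 * CNOT 2 0 := Matrix.inv_eq_left_inv hLL

lemma L_mulVec (v : (Fin 7 → Bool) → ℂ) :
    (CNOT 1 0 * CNOT 2 0 : Matrix (Fin 7 → Bool) (Fin 7 → Bool) ℂ).mulVec v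
      = fun y => v (Fc 2 0 (Fc 1 0 y)) := by
  rw [← Matrix.mulVec_mulVec, cnot_mulVec 2 0 hFc2, cnot_mulVec 1 0 hFc1]

lemma zrotAt_mulVec (θ : ℝ) (t : Fin 7) (v : (Fin 7 → Bool) → ℂ) :
    (ZrotAt θ t : Matrix (Fin 7 → Bool) (Fin 7 → Bool) ℂ).mulVec v
      = fun y => (if y t then Complex.exp (θ * Complex.I) else 1) * v y := by
  funext y
  simp only [Matrix.mulVec, dotProduct, ZrotAt, Matrix.of_apply, ite_mul, zero_mul]
  simp

lemma conj_mulVec (θ : ℝ) (v : (Fin 7 → Bool) → ℂ) :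
    ((CNOT 1 0 * CNOT 2 0 : Matrix (Fin 7 → Bool) (Fin 7 → Bool) ℂ)⁻¹ *
        ZrotAt θ 0 * (CNOT 1 0 * CNOT 2 0)).mulVec v
      = fun y => (if (Fc 2 0 (Fc 1 0 y)) 0 then Complex.exp (θ * Complex.I) else 1) * v y := by
  rw [Linv, ← Matrix.mulVec_mulVec, ← Matrix.mulVec_mulVec, L_mulVec, zrotAt_mulVec, L_mulVec]
  funext y
  simp only []
  rw [hFc4']

lemma xall_mulVec (v : (Fin 7 → Bool) → ℂ) :
    (tensMat fun _ : Fin 7 => σx).mulVec v = fun y => v (fun i => !(y i)) := by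
  funext y
  simp only [Matrix.mulVec, dotProduct, tensMat, σx, Matrix.of_apply]
  have key : ∀ x : Fin 7 → Bool,
      (∏ i, if (y i) = !(x i) then (1 : ℂ) else 0) = if x = (fun i => !(y i)) then 1 else 0 := by
    intro x
    rw [Finset.prod_boole]
    congr 1
    simp only [Finset.mem_univ, true_implies, eq_iff_iff]
    constructor
    · intro h; funext i; show x i = !(y i); rw [h i, Bool.not_not]
    · intro h i; rw [h]; simp
  simp only [key, ite_mul, one_mul, zero_mul]
  simp

lemma steane_false_apply (y : Fin 7 → Bool) :
    steane false y = if y ∈ hammingC then ((Real.sqrt 8 : ℂ))⁻¹ else 0 := by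
  simp [steane]

lemma steane_true_eq :
    steane true = fun y => if (fun i => !(y i)) ∈ hammingC then ((Real.sqrt 8 : ℂ))⁻¹ else 0 := by
  have h1 : steane true = (tensMat fun _ : Fin 7 => σx).mulVec
      (fun y => if y ∈ hammingC then ((Real.sqrt 8 : ℂ))⁻¹ else 0) := rfl
  rw [h1, xall_mulVec]

lemma hpar0 : ∀ a b c : Bool,
    (Fc 2 0 (Fc 1 0 (fun i => xor (a && steaneGen 0 i)
      (xor (b && steaneGen 1 i) (c && steaneGen 2 i))))) 0 = false := by decide

lemma hpar1 : ∀ a b c : Bool,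
    (Fc 2 0 (Fc 1 0 (fun i => !(xor (a && steaneGen 0 i)
      (xor (b && steaneGen 1 i) (c && steaneGen 2 i)))))) 0 = true := by decide

lemma act_false (θ : ℝ) :
    ((CNOT 1 0 * CNOT 2 0 : Matrix (Fin 7 → Bool) (Fin 7 → Bool) ℂ)⁻¹ *
        ZrotAt θ 0 * (CNOT 1 0 * CNOT 2 0)).mulVec (steane false) = steane false := by
  rw [conj_mulVec]
  funext y
  by_cases hy : y ∈ hammingC
  · obtain ⟨a, b, c, rfl⟩ := hy
    rw [hpar0 a b c]
    simp
  · rw [steane_false_apply, if_neg hy, mul_zero]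

lemma act_true (θ : ℝ) :
    ((CNOT 1 0 * CNOT 2 0 : Matrix (Fin 7 → Bool) (Fin 7 → Bool) ℂ)⁻¹ *
        ZrotAt θ 0 * (CNOT 1 0 * CNOT 2 0)).mulVec (steane true)
      = Complex.exp (θ * Complex.I) • steane true := by
  rw [conj_mulVec, steane_true_eq]
  funext y
  simp only [Pi.smul_apply, smul_eq_mul]
  by_cases hy : (fun i => !(y i)) ∈ hammingC
  · obtain ⟨a, b, c, hc⟩ := hy
    have hy2 : y = fun i => !(xor (a && steaneGen 0 i)
        (xor (b && steaneGen 1 i) (c && steaneGen 2 i))) := by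
      funext i
      have h2 := congrFun hc i
      rw [← h2, Bool.not_not]
    have hmem : (fun i => !(y i)) ∈ hammingC := ⟨a, b, c, hc⟩
    rw [if_pos hmem]
    rw [hy2, hpar1 a b c]
    simp
  · rw [if_neg hy]
    simp

/-- for the Steane code there are a 3-element set `A ⊆ {1,…,7}` and
`t ∈ A` such that for every `θ` the circuit
`V = (∏_{i∈A\{t}} CNOT_{i→t})⁻¹ · Z(θ)_t · (∏_{i∈A\{t}} CNOT_{i→t})` preserves the
Steane codespace and implements the logical `Z(θ)` gate. -/
theorem stmt4 :
    ∃ (A : Finset (Fin 7)) (t : Fin 7) (l : List (Fin 7)),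
      A.card = 3 ∧ t ∈ A ∧ l.Nodup ∧ l.toFinset = A.erase t ∧
      ∀ θ : ℝ,
        ((l.map fun i => CNOT i t).prod⁻¹ * ZrotAt θ t *
            (l.map fun i => CNOT i t).prod).mulVec (steane false) = steane false ∧
        ((l.map fun i => CNOT i t).prod⁻¹ * ZrotAt θ t *
            (l.map fun i => CNOT i t).prod).mulVec (steane true)
          = Complex.exp (θ * Complex.I) • steane true ∧
        ∀ u ∈ Submodule.span ℂ {steane false, steane true},
          ((l.map fun i => CNOT i t).prod⁻¹ * ZrotAt θ t *
              (l.map fun i => CNOT i t).prod).mulVec u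
            ∈ Submodule.span ℂ {steane false, steane true} := by
  refine ⟨{0, 1, 2}, 0, [1, 2], by decide, by decide, by decide, by decide, ?_⟩
  intro θ
  have hl : (([1, 2] : List (Fin 7)).map fun i => CNOT i 0).prod
      = (CNOT 1 0 * CNOT 2 0 : Matrix (Fin 7 → Bool) (Fin 7 → Bool) ℂ) := by
    simp
  rw [hl]
  refine ⟨act_false θ, act_true θ, ?_⟩
  intro u hu
  refine Submodule.span_induction ?_ ?_ ?_ ?_ hu
  · intro x hx
    rcases hx with hx | hx
    · rw [hx, act_false]
      exact Submodule.subset_span (Set.mem_insert _ _)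
    · simp only [Set.mem_singleton_iff] at hx
      rw [hx, act_true]
      exact Submodule.smul_mem _ _
        (Submodule.subset_span (Set.mem_insert_of_mem _ rfl))
  · rw [Matrix.mulVec_zero]; exact Submodule.zero_mem _
  · intro x y _ _ hx hy
    rw [Matrix.mulVec_add]; exact Submodule.add_mem _ hx hy
  · intro c x _ hx
    rw [Matrix.mulVec_smul]; exact Submodule.smul_mem _ _ hx

end
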